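/- Let n = pq with p, q distinct primes, let e be coprime to φ(n), and let k be a positive integer. Then Σ_{d | k} |T_{n,e,d}| = gcd(e^k − 1, p − 1) · gcd(e^k − 1, q − 1), where T_{n,e,d} is the set of units x modulo n with x^(e^d) ≡ x (mod n) and x^(e^j) ≢ x (mod n) for all positive j < d. -/

import Mathlib

open Finset

lemma card_pow_eq_one_of_dvd {G : Type*} [Group G] [Fintype G] [IsCyclic G] [DecidableEq G]
    {d : ℕ} (hd : d ∣ Fintype.card G) (hd0 : 0 < d) :
    (Finset.univ.filter fun a : G => a ^ d = 1).card = d := by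
  refine le_antisymm (by simpa using IsCyclic.card_pow_eq_one_le hd0) ?_
  obtain ⟨g, hg⟩ := IsCyclic.exists_generator (α := G)
  have hog : orderOf g = Fintype.card G := by
    rw [orderOf_eq_card_of_forall_mem_zpowers hg, Nat.card_eq_fintype_card]
  set a := g ^ (Fintype.card G / d) with ha
  have hoa : orderOf a = d := by
    rw [ha, orderOf_pow, hog]
    have h1 : Fintype.card G / d ∣ Fintype.card G := Nat.div_dvd_of_dvd hd
    rw [Nat.gcd_eq_right h1, Nat.div_div_self hd Fintype.card_ne_zero]
  have := Finset.card_le_card_of_injOn (f := fun i : ℕ => a ^ i)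
    (s := Finset.range d) (t := Finset.univ.filter fun x : G => x ^ d = 1)
    (fun i _ => by
      show a ^ i ∈ ((Finset.univ.filter fun x : G => x ^ d = 1 : Finset G) : Set G)
      rw [Finset.mem_coe, Finset.mem_filter]
      refine ⟨Finset.mem_univ _, ?_⟩
      rw [← pow_mul, mul_comm, pow_mul, ← hoa, pow_orderOf_eq_one, one_pow])
    (by
      intro i hi j hj hij
      simp only [Finset.coe_range, Set.mem_Iio] at hi hj
      exact pow_injOn_Iio_orderOf (by simpa [hoa] using hi) (by simpa [hoa] using hj) hij)
  simpa using this

lemma card_pow_eq_one_eq_gcd {G : Type*} [Group G] [Fintype G] [IsCyclic G] [DecidableEq G] (N : ℕ) :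
    (Finset.univ.filter fun a : G => a ^ N = 1).card = Nat.gcd N (Fintype.card G) := by
  rcases Nat.eq_zero_or_pos N with rfl | hN
  · simp [Finset.filter_true_of_mem]
  · have h : ∀ a : G, a ^ N = 1 ↔ a ^ Nat.gcd N (Fintype.card G) = 1 := fun a =>
      by rw [pow_gcd_eq_one]; exact ⟨fun h => ⟨h, pow_card_eq_one⟩, fun h => h.1⟩
    simp_rw [h]
    exact card_pow_eq_one_of_dvd (Nat.gcd_dvd_right _ _) (Nat.gcd_pos_of_pos_left _ hN)

def natSubtypeEquivUnits {n : ℕ} [NeZero n] (P : ℕ → Prop) :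
    {x : ℕ // x < n ∧ x.Coprime n ∧ P x} ≃ {u : (ZMod n)ˣ // P (ZMod.val (u : ZMod n))} where
  toFun x := ⟨ZMod.unitOfCoprime x.1 x.2.2.1, by
    rcases x with ⟨x, hlt, hcop, hP⟩
    simpa [ZMod.unitOfCoprime, ZMod.val_cast_of_lt hlt] using hP⟩
  invFun u := ⟨(u.1 : ZMod n).val, ZMod.val_lt _, ZMod.val_coe_unit_coprime u.1, u.2⟩
  left_inv x := by
    rcases x with ⟨x, hlt, hcop, hP⟩
    simp [ZMod.unitOfCoprime, ZMod.val_cast_of_lt hlt]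
  right_inv u := by
    rcases u with ⟨u, hu⟩
    simp only [Subtype.mk.injEq]
    ext
    simp [ZMod.unitOfCoprime, ZMod.natCast_val, ZMod.cast_id]

theorem stmt10 (p q e k : ℕ) (hp : p.Prime) (hq : q.Prime) (hpq : p ≠ q)
    (he : Nat.Coprime e (Nat.totient (p * q))) (hk : 0 < k) :
    ∑ d ∈ k.divisors,
        Nat.card {x : ℕ // x < p * q ∧ Nat.Coprime x (p * q) ∧
          x ^ e ^ d ≡ x [MOD p * q] ∧
          ∀ j, 0 < j → j < d → ¬ x ^ e ^ j ≡ x [MOD p * q]} =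
      Nat.gcd (e ^ k - 1) (p - 1) * Nat.gcd (e ^ k - 1) (q - 1) := by
  classical
  haveI : Fact p.Prime := ⟨hp⟩
  haveI : Fact q.Prime := ⟨hq⟩
  have hcop : Nat.Coprime p q := (Nat.coprime_primes hp hq).mpr hpq
  have hn0 : p * q ≠ 0 := Nat.mul_ne_zero hp.pos.ne' hq.pos.ne'
  haveI : NeZero (p * q) := ⟨hn0⟩
  set G := (ZMod (p * q))ˣ with hG
  have hcard : Fintype.card G = Nat.totient (p * q) := ZMod.card_units_eq_totient _
  have he0 : 0 < e := by
    rcases Nat.eq_zero_or_pos e with rfl | h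
    · exfalso
      have h1 : Nat.totient (p * q) = 1 := by simpa [Nat.coprime_zero_left] using he
      rw [Nat.totient_mul hcop, Nat.totient_prime hp, Nat.totient_prime hq] at h1
      have h2 : p - 1 = 1 := Nat.eq_one_of_mul_eq_one_right h1
      have h3 : q - 1 = 1 := Nat.eq_one_of_mul_eq_one_left h1
      have hp2 := hp.two_le
      have hq2 := hq.two_le
      omega
    · exact h
  set m : G → ℕ := fun u => orderOf ((e : ZMod (orderOf u))) with hm
  have hre : ∀ u : G, e.Coprime (orderOf u) := fun u =>
    Nat.Coprime.coprime_dvd_right (hcard ▸ orderOf_dvd_card) he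
  have hmpos : ∀ u : G, 0 < m u := by
    intro u
    have h2 : e ^ Nat.totient (orderOf u) ≡ 1 [MOD orderOf u] := Nat.ModEq.pow_totient (hre u)
    have h1 : (e : ZMod (orderOf u)) ^ Nat.totient (orderOf u) = 1 := by
      have h3 := (ZMod.natCast_eq_natCast_iff _ _ _).mpr h2
      push_cast at h3
      exact h3
    exact orderOf_pos_iff.mpr (isOfFinOrder_iff_pow_eq_one.mpr
      ⟨_, Nat.totient_pos.mpr (orderOf_pos u), h1⟩)
  have hsub1 : ∀ (u : G) (j : ℕ), u ^ e ^ j = u ↔ u ^ (e ^ j - 1) = 1 := by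
    intro u j
    have h1 : (1:ℕ) ≤ e ^ j := Nat.one_le_pow _ _ he0
    have hsplit : u ^ e ^ j = u ^ (e ^ j - 1) * u := by
      conv_lhs => rw [show e ^ j = (e ^ j - 1) + 1 by omega]
      rw [pow_succ]
    rw [hsplit, mul_eq_right]
  have hcond : ∀ (u : G) (j : ℕ), u ^ e ^ j = u ↔ m u ∣ j := by
    intro u j
    have h1 : (1:ℕ) ≤ e ^ j := Nat.one_le_pow _ _ he0
    calc u ^ e ^ j = u ↔ u ^ (e ^ j - 1) = 1 := hsub1 u j
      _ ↔ orderOf u ∣ e ^ j - 1 := orderOf_dvd_iff_pow_eq_one.symm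
      _ ↔ (1:ℕ) ≡ e ^ j [MOD orderOf u] := (Nat.modEq_iff_dvd' h1).symm
      _ ↔ ((1:ℕ) : ZMod (orderOf u)) = ((e ^ j : ℕ) : ZMod (orderOf u)) :=
          (ZMod.natCast_eq_natCast_iff _ _ _).symm
      _ ↔ (e : ZMod (orderOf u)) ^ j = 1 := by push_cast; rw [eq_comm]
      _ ↔ m u ∣ j := orderOf_dvd_iff_pow_eq_one.symm
  have hcardd : ∀ d ∈ k.divisors,
      Nat.card {x : ℕ // x < p * q ∧ Nat.Coprime x (p * q) ∧
        x ^ e ^ d ≡ x [MOD p * q] ∧ ∀ j, 0 < j → j < d → ¬ x ^ e ^ j ≡ x [MOD p * q]} =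
      (Finset.univ.filter fun u : G => m u = d).card := by
    intro d hd
    have hd0 : 0 < d := Nat.pos_of_dvd_of_pos (Nat.mem_divisors.mp hd).1 hk
    rw [Nat.card_congr (natSubtypeEquivUnits (fun x => x ^ e ^ d ≡ x [MOD p * q] ∧
        ∀ j, 0 < j → j < d → ¬ x ^ e ^ j ≡ x [MOD p * q])),
      Nat.card_eq_fintype_card, Fintype.card_subtype]
    congr 1
    apply Finset.filter_congr
    intro u _
    have hval : ∀ E : ℕ, (ZMod.val (u.1 : ZMod (p*q)) ^ E ≡ ZMod.val (u.1 : ZMod (p*q)) [MOD p * q])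
        ↔ u ^ E = u := by
      intro E
      rw [← ZMod.natCast_eq_natCast_iff]
      push_cast
      rw [ZMod.natCast_val, ZMod.cast_id]
      constructor
      · intro h; exact Units.ext (by rw [Units.val_pow_eq_pow_val]; exact h)
      · intro h; rw [← Units.val_pow_eq_pow_val, h]
    simp only [hval, hcond]
    constructor
    · rintro ⟨h1, h2⟩
      rcases lt_or_eq_of_le (Nat.le_of_dvd hd0 h1) with hlt | heq
      · exact absurd dvd_rfl (h2 (m u) (hmpos u) hlt)
      · exact heq
    · rintro rfl
      exact ⟨dvd_rfl, fun j hj0 hj hdvd => absurd (Nat.le_of_dvd hj0 hdvd) (not_le.mpr hj)⟩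
  rw [Finset.sum_congr rfl hcardd]
  have hsum : (Finset.univ.filter fun u : G => m u ∣ k).card
      = ∑ d ∈ k.divisors, (Finset.univ.filter fun u : G => m u = d).card := by
    rw [Finset.card_eq_sum_card_fiberwise (f := m) (t := k.divisors)
      (fun u hu => Nat.mem_divisors.mpr ⟨(Finset.mem_filter.mp hu).2, hk.ne'⟩)]
    refine Finset.sum_congr rfl fun d hd => ?_
    congr 1
    ext u
    simp only [Finset.mem_filter, Finset.mem_univ, true_and]
    exact ⟨fun h => h.2, fun h => ⟨h ▸ (Nat.mem_divisors.mp hd).1, h⟩⟩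
  rw [← hsum]
  have hfe : (Finset.univ.filter fun u : G => m u ∣ k)
      = (Finset.univ.filter fun u : G => u ^ (e ^ k - 1) = 1) := by
    ext u
    simp only [Finset.mem_filter, Finset.mem_univ, true_and]
    rw [← hcond, hsub1]
  rw [hfe]
  -- CRT counting
  set N := e ^ k - 1 with hN
  let E : G ≃* (ZMod p)ˣ × (ZMod q)ˣ :=
    (Units.mapEquiv (ZMod.chineseRemainder hcop).toMulEquiv).trans MulEquiv.prodUnits
  have h1 : (Finset.univ.filter fun u : G => u ^ N = 1).card
      = Fintype.card {v : (ZMod p)ˣ × (ZMod q)ˣ // v.1 ^ N = 1 ∧ v.2 ^ N = 1} := by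
    rw [← Fintype.card_subtype]
    refine Fintype.card_congr (E.toEquiv.subtypeEquiv fun u => ?_)
    rw [show (E.toEquiv u) = E u from rfl]
    constructor
    · intro h
      constructor
      · have : (E u) ^ N = 1 := by rw [← map_pow, h, map_one]
        exact congrArg Prod.fst this
      · have : (E u) ^ N = 1 := by rw [← map_pow, h, map_one]
        exact congrArg Prod.snd this
    · rintro ⟨h1, h2⟩
      have : (E u) ^ N = 1 := Prod.ext h1 h2
      rw [← map_pow] at this
      exact E.injective (by rw [this, map_one])
  have h2 : Fintype.card {v : (ZMod p)ˣ × (ZMod q)ˣ // v.1 ^ N = 1 ∧ v.2 ^ N = 1}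
      = Fintype.card {a : (ZMod p)ˣ // a ^ N = 1} * Fintype.card {b : (ZMod q)ˣ // b ^ N = 1} := by
    rw [← Fintype.card_prod]
    exact Fintype.card_congr (Equiv.subtypeProdEquivProd (p := fun a : (ZMod p)ˣ => a ^ N = 1) (q := fun b : (ZMod q)ˣ => b ^ N = 1))
  rw [h1, h2, Fintype.card_subtype, Fintype.card_subtype,
    card_pow_eq_one_eq_gcd, card_pow_eq_one_eq_gcd,
    ZMod.card_units_eq_totient, ZMod.card_units_eq_totient,
    Nat.totient_prime hp, Nat.totient_prime hq]
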